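/- For f(x) = x − ⌊x⌋ − 1/2 and S_n(x) = Σ_{k=1}^n f(2^k x), the moment generating function satisfies, for every real z, ∫_0^1 e^{z S_n(x)} dx = Π_{p=2}^{n+1} cosh(z(1/2 − 1/2^p)) · Π_{p=n+2}^∞ cosh(z(1/2^{p−n} − 1/2^p)), the infinite product being convergent. -/

import Mathlib

open MeasureTheory Real Filter Topology

/-- The first Bernoulli polynomial of the fractional part, `f(x) = x - ⌊x⌋ - 1/2`. -/
noncomputable def bern (x : ℝ) : ℝ := x - ⌊x⌋ - 1 / 2

lemma bern_eq (x : ℝ) : bern x = Int.fract x - 1/2 := by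
  unfold bern Int.fract
  ring

lemma bern_abs_le (x : ℝ) : |bern x| ≤ 1/2 := by
  rw [bern_eq]
  have h1 := Int.fract_nonneg x
  have h2 := Int.fract_lt_one x
  rw [abs_le]; constructor <;> linarith

lemma bern_add_nat (x : ℝ) (m : ℕ) : bern (x + m) = bern x := by
  rw [bern_eq, bern_eq, Int.fract_add_natCast]

lemma measurable_bern : Measurable bern := by
  have : bern = fun x => Int.fract x - 1/2 := funext bern_eq
  rw [this]; exact measurable_fract.sub measurable_const

noncomputable def U (n : ℕ) (s : ℝ) : ℝ := ∑ k ∈ Finset.range n, bern (2^(k+1) * s)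

lemma U_eq (n : ℕ) (s : ℝ) : ∑ k ∈ Finset.Icc 1 n, bern (2^k * s) = U n s := by
  rw [U, ← Finset.Ico_add_one_right_eq_Icc, Finset.sum_Ico_eq_sum_range]
  exact Finset.sum_congr rfl fun k _ => by rw [Nat.add_comm]

lemma U_rec (n : ℕ) (s : ℝ) : U (n+1) s = U n (2*s) + bern (2*s) := by
  rw [U, Finset.sum_range_succ', U]
  congr 1
  · exact Finset.sum_congr rfl fun k _ => by congr 1; ring
  · norm_num

lemma U_add_one (n : ℕ) (s : ℝ) : U n (s + 1) = U n s := by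
  rw [U, U]
  refine Finset.sum_congr rfl fun k _ => ?_
  have h : (2:ℝ)^(k+1) * (s+1) = 2^(k+1) * s + ((2^(k+1) : ℕ) : ℝ) := by push_cast; ring
  rw [h, bern_add_nat]

lemma measurable_U (n : ℕ) : Measurable (U n) := by
  apply Finset.measurable_sum
  intro k _
  exact measurable_bern.comp (measurable_const.mul measurable_id)

lemma U_abs_le (n : ℕ) (s : ℝ) : |U n s| ≤ n/2 := by
  calc |U n s| ≤ ∑ k ∈ Finset.range n, |bern (2^(k+1) * s)| :=
        Finset.abs_sum_le_sum_abs _ _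
    _ ≤ ∑ k ∈ Finset.range n, 1/2 := Finset.sum_le_sum fun k _ => bern_abs_le _
    _ = n/2 := by simp [Finset.sum_const]; ring

lemma intInt (a z : ℝ) (n : ℕ) :
    IntervalIntegrable (fun s => Real.exp (a*s + z * U n s)) volume 0 1 := by
  rw [intervalIntegrable_iff]
  have hmeas : Measurable fun s : ℝ => Real.exp (a*s + z*U n s) :=
    ((measurable_const.mul measurable_id).add (measurable_const.mul (measurable_U n))).exp
  refine Measure.integrableOn_of_bounded (M := Real.exp (|a| + |z| * (n/2)))
    (by simp) hmeas.aestronglyMeasurable ?_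
  refine ae_restrict_of_forall_mem measurableSet_uIoc fun x hx => ?_
  rw [Set.uIoc_of_le zero_le_one] at hx
  have h1 : |a * x| ≤ |a| := by
    rw [abs_mul]
    have : |x| ≤ 1 := abs_le.mpr ⟨by linarith [hx.1], hx.2⟩
    nlinarith [abs_nonneg a]
  have h2 : |z * U n x| ≤ |z| * (n/2) := by
    rw [abs_mul]
    exact mul_le_mul_of_nonneg_left (U_abs_le n x) (abs_nonneg z)
  rw [Real.norm_eq_abs, Real.abs_exp, Real.exp_le_exp]
  have := abs_le.mp h1
  have := abs_le.mp h2
  linarith [this.1, this.2]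

lemma step (a z : ℝ) (n : ℕ) :
    ∫ s in (0:ℝ)..1, Real.exp (a*s + z * U (n+1) s)
      = (1 + Real.exp (a/2)) * Real.exp (-(z/2)) / 2 *
        ∫ u in (0:ℝ)..1, Real.exp ((a/2 + z) * u + z * U n u) := by
  have hint := intInt a z (n+1)
  -- split at 1/2
  have h1 : IntervalIntegrable (fun s => Real.exp (a*s + z * U (n+1) s)) volume 0 (1/2) :=
    hint.mono_set (by rw [Set.uIcc_of_le, Set.uIcc_of_le] <;> norm_num <;>
      exact Set.Icc_subset_Icc (le_refl _) (by norm_num))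
  have h2 : IntervalIntegrable (fun s => Real.exp (a*s + z * U (n+1) s)) volume (1/2) 1 :=
    hint.mono_set (by rw [Set.uIcc_of_le, Set.uIcc_of_le] <;> norm_num <;>
      exact Set.Icc_subset_Icc (by norm_num) (le_refl _))
  rw [← intervalIntegral.integral_add_adjacent_intervals h1 h2]
  -- second piece
  have h3 : (∫ s in (1/2:ℝ)..1, Real.exp (a*s + z * U (n+1) s))
      = ∫ t in (0:ℝ)..(1/2), Real.exp (a*(t+1/2) + z * U (n+1) (t+1/2)) := by
    rw [intervalIntegral.integral_comp_add_right (fun s => Real.exp (a*s + z * U (n+1) s)) (1/2)]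
    norm_num
  rw [h3]
  have h4 : ∀ t : ℝ, Real.exp (a*(t+1/2) + z * U (n+1) (t+1/2))
      = Real.exp (a/2) * Real.exp (a*t + z * U (n+1) t) := by
    intro t
    have hU : U (n+1) (t + 1/2) = U (n+1) t := by
      rw [U_rec, U_rec]
      have h2t : 2*(t+1/2) = 2*t + 1 := by ring
      rw [h2t]
      have hb : bern (2*t + 1) = bern (2*t) := by
        have := bern_add_nat (2*t) 1
        simpa using this
      rw [U_add_one, hb]
    rw [hU, ← Real.exp_add]
    congr 1; ring
  simp only [h4]
  rw [intervalIntegral.integral_const_mul]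
  have hcomb : (∫ s in (0:ℝ)..(1/2), Real.exp (a*s + z * U (n+1) s)) +
      Real.exp (a/2) * ∫ t in (0:ℝ)..(1/2), Real.exp (a*t + z * U (n+1) t)
      = (1 + Real.exp (a/2)) * ∫ t in (0:ℝ)..(1/2), Real.exp (a*t + z * U (n+1) t) := by
    ring
  rw [hcomb]
  -- substitute u = 2t on [0,1/2]
  have h5 : (∫ t in (0:ℝ)..(1/2), Real.exp (a*t + z * U (n+1) t))
      = (2:ℝ)⁻¹ • ∫ u in (0:ℝ)..1, Real.exp ((a/2)*u + z * (U n u + bern u)) := by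
    have := intervalIntegral.integral_comp_mul_left (a := 0) (b := 1/2)
      (fun u => Real.exp ((a/2)*u + z * (U n u + bern u))) (by norm_num : (2:ℝ) ≠ 0)
    rw [show (2:ℝ) * 0 = 0 by ring, show (2:ℝ) * (1/2) = 1 by ring] at this
    rw [← this]
    refine intervalIntegral.integral_congr fun t _ => ?_
    rw [U_rec]
    congr 1; ring
  rw [h5]
  -- replace bern u by u - 1/2 a.e. on (0,1]
  have h6 : (∫ u in (0:ℝ)..1, Real.exp ((a/2)*u + z * (U n u + bern u)))
      = ∫ u in (0:ℝ)..1, Real.exp (-(z/2)) * Real.exp ((a/2 + z)*u + z * U n u) := by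
    apply intervalIntegral.integral_congr_ae
    have hae : ∀ᵐ u : ℝ, u ≠ 1 := by
      rw [MeasureTheory.ae_iff]
      have h : {u : ℝ | ¬ u ≠ 1} = {1} := by ext u; simp
      rw [h]; exact measure_singleton 1
    filter_upwards [hae] with u hu hmem
    rw [Set.uIoc_of_le zero_le_one] at hmem
    have hu1 : u < 1 := lt_of_le_of_ne hmem.2 hu
    have hfloor : ⌊u⌋ = 0 := Int.floor_eq_zero_iff.mpr ⟨le_of_lt hmem.1, hu1⟩
    have hbern : bern u = u - 1/2 := by rw [bern]; rw [hfloor]; push_cast; ring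
    rw [hbern, ← Real.exp_add]
    congr 1; ring
  rw [h6, intervalIntegral.integral_const_mul]
  rw [smul_eq_mul]
  ring

lemma int_exp_mul (c : ℝ) (hc : c ≠ 0) :
    ∫ s in (0:ℝ)..1, Real.exp (c*s) = (Real.exp c - 1)/c := by
  have := intervalIntegral.integral_comp_mul_left Real.exp hc (a := 0) (b := 1)
  rw [mul_zero, mul_one] at this
  rw [this, integral_exp, Real.exp_zero, smul_eq_mul]
  field_simp

lemma key (z : ℝ) (n : ℕ) : ∀ a : ℝ,
    ∫ s in (0:ℝ)..1, Real.exp (a*s + z * U n s)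
      = (∏ k ∈ Finset.range n,
          ((1 + Real.exp (a/2^(k+1) + z*(1 - 1/2^k))) * Real.exp (-(z/2)) / 2))
        * ∫ s in (0:ℝ)..1, Real.exp ((a/2^n + 2*z*(1 - 1/2^n)) * s) := by
  induction n with
  | zero =>
    intro a
    simp [U]
  | succ n ih =>
    intro a
    rw [step a z n, ih (a/2 + z)]
    rw [← mul_assoc]
    have harg : (a/2 + z)/2^n + 2*z*(1 - 1/2^n) = a/2^(n+1) + 2*z*(1 - 1/2^(n+1)) := by
      have h2n : (2:ℝ)^n ≠ 0 := by positivity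
      field_simp
      try ring
    rw [harg]
    congr 1
    rw [Finset.prod_range_succ']
    rw [mul_comm]
    congr 1
    · refine Finset.prod_congr rfl fun k _ => ?_
      have hk : (a/2 + z)/2^(k+1) + z*(1 - 1/2^k) = a/2^(k+1+1) + z*(1 - 1/2^(k+1)) := by
        have h2k : (2:ℝ)^k ≠ 0 := by positivity
        field_simp
        try ring
      rw [hk]
    · norm_num

lemma geo_sum (n : ℕ) : ∑ k ∈ Finset.range n, (1:ℝ)/2^(k+1) = 1 - 1/2^n := by
  induction n with
  | zero => simp
  | succ n ih =>
    rw [Finset.sum_range_succ, ih]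
    have h2n : (2:ℝ)^n ≠ 0 := by positivity
    field_simp
    try ring

lemma cosh_prod_partial (w : ℝ) (hw : w ≠ 0) (N : ℕ) :
    ∏ j ∈ Finset.range N, Real.cosh (w / 2^(j+2))
      = Real.sinh (w/2) / (2^N * Real.sinh (w/2^(N+1))) := by
  induction N with
  | zero =>
    have : Real.sinh (w/2) ≠ 0 := Real.sinh_ne_zero.mpr (by simpa using div_ne_zero hw two_ne_zero)
    simp [this]
  | succ N ih =>
    rw [Finset.prod_range_succ, ih]
    have hs : Real.sinh (w/2^(N+1)) = 2 * Real.sinh (w/2^(N+2)) * Real.cosh (w/2^(N+2)) := by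
      rw [← Real.sinh_two_mul]
      congr 1
      rw [pow_succ]
      field_simp
      try ring
    have hsne : Real.sinh (w/2^(N+2)) ≠ 0 :=
      Real.sinh_ne_zero.mpr (div_ne_zero hw (by positivity))
    have hcne : Real.cosh (w/2^(N+2)) ≠ 0 := (Real.cosh_pos _).ne'
    rw [hs]
    have h2 : (2:ℝ)^N ≠ 0 := by positivity
    field_simp
    try ring

lemma tendsto_denom (w : ℝ) (hw : w ≠ 0) :
    Tendsto (fun N : ℕ => (2:ℝ)^N * Real.sinh (w/2^(N+1))) atTop (𝓝 (w/2)) := by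
  have hslope : Tendsto (fun t : ℝ => Real.sinh t / t) (nhdsWithin 0 {(0:ℝ)}ᶜ) (𝓝 1) := by
    have hd : HasDerivAt Real.sinh 1 0 := by simpa using Real.hasDerivAt_sinh 0
    have := hasDerivAt_iff_tendsto_slope.mp hd
    refine this.congr' ?_
    filter_upwards [self_mem_nhdsWithin] with t ht
    simp [slope_def_field]
  have ht : Tendsto (fun N : ℕ => w / 2^(N+1)) atTop (nhdsWithin 0 {(0:ℝ)}ᶜ) := by
    apply tendsto_nhdsWithin_of_tendsto_nhds_of_eventually_within
    · have : Tendsto (fun N : ℕ => (2:ℝ)^(N+1)) atTop atTop :=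
        (tendsto_pow_atTop_atTop_of_one_lt one_lt_two).comp (tendsto_add_atTop_nat 1)
      simpa using Tendsto.div_atTop tendsto_const_nhds this
    · filter_upwards with N
      exact div_ne_zero hw (by positivity)
  have hcomp : Tendsto (fun N : ℕ => Real.sinh (w/2^(N+1)) / (w/2^(N+1))) atTop (𝓝 1) :=
    hslope.comp ht
  have heq : ∀ N : ℕ, (2:ℝ)^N * Real.sinh (w/2^(N+1))
      = (w/2) * (Real.sinh (w/2^(N+1)) / (w/2^(N+1))) := by
    intro N
    have h2 : (2:ℝ)^(N+1) ≠ 0 := by positivity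
    rw [pow_succ]
    field_simp
    try ring
  rw [show (w/2 : ℝ) = (w/2) * 1 by ring]
  exact Tendsto.congr (fun N => (heq N).symm) (tendsto_const_nhds.mul hcomp)

lemma multipliable_cosh (w : ℝ) : Multipliable (fun j : ℕ => Real.cosh (w/2^(j+2))) := by
  have hpos : ∀ (x : Unit) (j : ℕ), 0 < Real.cosh (w/2^(j+2)) := fun _ j => Real.cosh_pos _
  have hsum : ∀ _ : Unit, Summable fun j : ℕ => Real.log (Real.cosh (w/2^(j+2))) := by
    intro _
    apply Summable.of_nonneg_of_le
    · intro j
      exact Real.log_nonneg (Real.one_le_cosh _)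
    · intro j
      show Real.log (Real.cosh (w/2^(j+2))) ≤ (w^2/2) * (1/2)^j
      have h1 : Real.cosh (w/2^(j+2)) ≤ Real.exp ((w/2^(j+2))^2/2) :=
        Real.cosh_le_exp_half_sq _
      have h2 := Real.log_le_log (Real.cosh_pos _) h1
      rw [Real.log_exp] at h2
      refine h2.trans ?_
      rw [div_pow]
      have hle : (2:ℝ)^j ≤ ((2:ℝ)^(j+2))^2 := by
        rw [← pow_mul]
        exact pow_le_pow_right₀ one_le_two (by omega)
      have hp : (0:ℝ) < 2^j := by positivity
      calc w^2/((2:ℝ)^(j+2))^2/2 ≤ w^2/(2:ℝ)^j/2 := by gcongr <;> positivity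
        _ = (w^2/2) * (1/2)^j := by rw [div_pow, one_pow]; ring
    · exact (summable_geometric_of_lt_one (by norm_num) (by norm_num)).mul_left _
  exact Real.multipliable_of_summable_log (hpos ()) (hsum ())

lemma cosh_hasProd (w : ℝ) (hw : w ≠ 0) :
    HasProd (fun j : ℕ => Real.cosh (w/2^(j+2))) (2 * Real.sinh (w/2) / w) := by
  rw [(multipliable_cosh w).hasProd_iff_tendsto_nat]
  have hlim : Tendsto (fun N : ℕ => Real.sinh (w/2) / (2^N * Real.sinh (w/2^(N+1))))
      atTop (𝓝 (Real.sinh (w/2) / (w/2))) :=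
    tendsto_const_nhds.div (tendsto_denom w hw) (by simpa using div_ne_zero hw two_ne_zero)
  have heq : Real.sinh (w/2) / (w/2) = 2 * Real.sinh (w/2) / w := by
    field_simp
    try ring
  rw [← heq]
  exact Tendsto.congr (fun N => (cosh_prod_partial w hw N).symm) hlim

lemma exp_half_identity (w : ℝ) (hw : w ≠ 0) :
    Real.exp (-w) * ((Real.exp (2*w) - 1)/(2*w))
      = Real.cosh (w/2) * (2 * Real.sinh (w/2) / w) := by
  have hsinh : 2 * Real.sinh (w/2) * Real.cosh (w/2) = Real.sinh w := by
    rw [← Real.sinh_two_mul]; congr 1; ring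
  have h1 : Real.cosh (w/2) * (2 * Real.sinh (w/2) / w) = Real.sinh w / w := by
    rw [← hsinh]; ring
  have hexp : Real.exp w ≠ 0 := (Real.exp_pos w).ne'
  have h2 : Real.exp (2*w) - 1 = 2 * Real.exp w * Real.sinh w := by
    rw [Real.sinh_eq, show (2:ℝ)*w = w+w by ring, Real.exp_add, Real.exp_neg]
    field_simp
    try ring
  rw [h1, h2]
  rw [show Real.exp (-w) * ((2*Real.exp w*Real.sinh w)/(2*w))
        = (Real.exp (-w) * Real.exp w) * (Real.sinh w / w) from by ring, ← Real.exp_add]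
  simp

/-- For `f(x) = x - ⌊x⌋ - 1/2` and `S_n(x) = ∑_{k=1}^n f(2^k x)`, for every real
`z`, `∫_0^1 e^{z S_n(x)} dx = ∏_{p=2}^{n+1} cosh (z (1/2 - 1/2^p)) ·
∏_{p=n+2}^∞ cosh (z (1/2^(p-n) - 1/2^p))`, the infinite product being convergent. -/
theorem mgf_bern_sum (n : ℕ) (z : ℝ) :
    Multipliable (fun j : ℕ => Real.cosh (z * (1 / 2 ^ (j + 2) - 1 / 2 ^ (n + 2 + j)))) ∧
    ∫ x in (0 : ℝ)..1, Real.exp (z * ∑ k ∈ Finset.Icc 1 n, bern (2 ^ k * x)) =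
      (∏ p ∈ Finset.Icc 2 (n + 1), Real.cosh (z * (1 / 2 - 1 / 2 ^ p))) *
        ∏' j : ℕ, Real.cosh (z * (1 / 2 ^ (j + 2) - 1 / 2 ^ (n + 2 + j))) := by
  have hterm : ∀ j : ℕ, z * (1 / 2 ^ (j + 2) - 1 / 2 ^ (n + 2 + j))
      = (z * (1 - 1/2^n)) / 2^(j+2) := by
    intro j
    have h1 : (2:ℝ)^(n+2+j) = 2^n * 2^(j+2) := by rw [← pow_add]; congr 1; ring
    have h2 : (2:ℝ)^n ≠ 0 := by positivity
    have h3 : (2:ℝ)^(j+2) ≠ 0 := by positivity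
    rw [h1]
    field_simp
    try ring
  have hfun : (fun j : ℕ => Real.cosh (z * (1 / 2 ^ (j + 2) - 1 / 2 ^ (n + 2 + j))))
      = fun j : ℕ => Real.cosh ((z * (1 - 1/2^n)) / 2^(j+2)) :=
    funext fun j => by rw [hterm j]
  set w := z * (1 - 1/2^n) with hwdef
  by_cases hw : w = 0
  · -- degenerate case: z = 0 or n = 0; all cosh terms are 1
    have hconst : (fun j : ℕ => Real.cosh (z * (1 / 2 ^ (j + 2) - 1 / 2 ^ (n + 2 + j))))
        = fun _ : ℕ => (1:ℝ) := by
      rw [hfun]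
      funext j
      rw [hw]
      simp
    constructor
    · rw [hconst]; exact multipliable_one
    · rw [hconst, tprod_one]
      have hcases : z = 0 ∨ n = 0 := by
        rcases mul_eq_zero.mp hw with h | h
        · exact Or.inl h
        · right
          by_contra hn
          have hn1 : 1 ≤ n := Nat.one_le_iff_ne_zero.mpr hn
          have : (1:ℝ)/2^n < 1 := by
            rw [div_lt_one (by positivity)]
            exact one_lt_pow₀ one_lt_two hn
          linarith [sub_eq_zero.mp h]
      rcases hcases with hz | hn
      · subst hz
        simp
      · subst hn
        simp
  · -- main case: z ≠ 0, n ≥ 1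
    have hz : z ≠ 0 := fun h => hw (by rw [hwdef, h, zero_mul])
    constructor
    · rw [hfun]; exact multipliable_cosh w
    · rw [hfun, (cosh_hasProd w hw).tprod_eq]
      have hint : (∫ x in (0:ℝ)..1, Real.exp (z * ∑ k ∈ Finset.Icc 1 n, bern (2 ^ k * x)))
          = ∫ x in (0:ℝ)..1, Real.exp ((0:ℝ)*x + z * U n x) := by
        refine intervalIntegral.integral_congr fun x _ => ?_
        rw [U_eq]
        norm_num
      rw [hint, key z n 0]
      have harg : (0:ℝ)/2^n + 2*z*(1 - 1/2^n) = 2*w := by rw [hwdef]; ring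
      rw [harg, int_exp_mul (2*w) (by simpa using hw)]
      -- now pure algebra with products
      have hterm2 : ∀ k : ℕ,
          (1 + Real.exp ((0:ℝ)/2^(k+1) + z*(1 - 1/2^k))) * Real.exp (-(z/2)) / 2
            = Real.exp (-(z/2^(k+1))) * Real.cosh (z*(1/2 - 1/2^(k+1))) := by
        intro k
        have h2k : (2:ℝ)^k ≠ 0 := by positivity
        have e1 : (1 + Real.exp ((0:ℝ)/2^(k+1) + z*(1 - 1/2^k))) * Real.exp (-(z/2)) / 2
            = (Real.exp (-(z/2)) + Real.exp (z/2 - z/2^k)) / 2 := by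
          rw [add_mul, one_mul, ← Real.exp_add]
          congr 3
          field_simp
          try ring
        have e2 : Real.exp (-(z/2^(k+1))) * Real.cosh (z*(1/2 - 1/2^(k+1)))
            = (Real.exp (-(z/2)) + Real.exp (z/2 - z/2^k)) / 2 := by
          rw [Real.cosh_eq, ← mul_div_assoc, mul_add, ← Real.exp_add, ← Real.exp_add]
          rw [show -(z/2^(k+1)) + z*(1/2 - 1/2^(k+1)) = z/2 - z/2^k from by
                rw [pow_succ]; field_simp; try ring,
              show -(z/2^(k+1)) + -(z*(1/2 - 1/2^(k+1))) = -(z/2) from by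
                rw [pow_succ]; field_simp; try ring]
          ring
        rw [e1, e2]
      rw [Finset.prod_congr rfl fun k _ => hterm2 k]
      rw [Finset.prod_mul_distrib, ← Real.exp_sum]
      have hsum : ∑ k ∈ Finset.range n, -(z/2^(k+1)) = -w := by
        rw [hwdef]
        have : ∑ k ∈ Finset.range n, -(z/2^(k+1))
            = -z * ∑ k ∈ Finset.range n, (1:ℝ)/2^(k+1) := by
          rw [Finset.mul_sum]
          exact Finset.sum_congr rfl fun k _ => by ring
        rw [this, geo_sum]
        ring
      rw [hsum]
      -- product over Icc 2 (n+1)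
      have hIcc : ∏ p ∈ Finset.Icc 2 (n + 1), Real.cosh (z * (1 / 2 - 1 / 2 ^ p))
          = (∏ k ∈ Finset.range n, Real.cosh (z*(1/2 - 1/2^(k+1))))
            * Real.cosh (z*(1/2 - 1/2^(n+1))) := by
        rw [← Finset.Ico_add_one_right_eq_Icc, Finset.prod_Ico_eq_prod_range]
        simp only [show n + 1 + 1 - 2 = n from by omega]
        have lhs_eq : ∏ i ∈ Finset.range n, Real.cosh (z * (1/2 - 1/2^(2+i)))
            = ∏ k ∈ Finset.range n, Real.cosh (z*(1/2 - 1/2^(k+2))) :=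
          Finset.prod_congr rfl fun k _ => by rw [Nat.add_comm]
        rw [lhs_eq]
        have h1 : ∏ k ∈ Finset.range (n+1), Real.cosh (z*(1/2 - 1/2^(k+1)))
            = (∏ k ∈ Finset.range n, Real.cosh (z*(1/2 - 1/2^(k+1))))
              * Real.cosh (z*(1/2 - 1/2^(n+1))) := Finset.prod_range_succ _ _
        have h2 : ∏ k ∈ Finset.range (n+1), Real.cosh (z*(1/2 - 1/2^(k+1)))
            = (∏ k ∈ Finset.range n, Real.cosh (z*(1/2 - 1/2^(k+1+1))))
              * Real.cosh (z*(1/2 - 1/2^(0+1))) := Finset.prod_range_succ' _ _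
        rw [h1] at h2
        have h3 : Real.cosh (z*(1/2 - 1/2^(0+1))) = 1 := by norm_num
        rw [h3, mul_one] at h2
        exact h2.symm
      rw [hIcc]
      have hwhalf : z*(1/2 - 1/2^(n+1)) = w/2 := by
        rw [hwdef, pow_succ]
        have h2n : (2:ℝ)^n ≠ 0 := by positivity
        field_simp
        try ring
      rw [hwhalf]
      -- final identity: exp(-w) * P * ((exp(2w)-1)/(2w)) = (P * cosh(w/2)) * (2 sinh(w/2)/w)
      have hfin := exp_half_identity w hw
      linear_combination (∏ k ∈ Finset.range n, Real.cosh (z*(1/2 - 1/2^(k+1)))) * hfin
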